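/- arXiv:2111.08565 — 3 statements merged into one kernel-verified Lean document; each statement's English description precedes it below -/
import Mathlib

section
/- Let H be the 4×4 antisymmetric matrix with H_{ij} = 1 for i < j, H_{ij} = -1 for i > j. For every η > 0, the matrix I + η·H is invertible, and every eigenvalue μ of (I + η·H)⁻¹·H satisfies |1 - η·μ| < 1. -/
noncomputable section PCGDaux

private def Hmat : Matrix (Fin 4) (Fin 4) ℂ :=
  !![0, 1, 1, 1; -1, 0, 1, 1; -1, -1, 0, 1; -1, -1, -1, 0]

private lemma det_one_add (η : ℝ) :
    (1 + (η : ℂ) • Hmat).det = 1 + 6 * (η:ℂ)^2 + (η:ℂ)^4 := by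
  have h : (1 + (η : ℂ) • Hmat) =
      !![1, (η:ℂ), (η:ℂ), (η:ℂ); -(η:ℂ), 1, (η:ℂ), (η:ℂ);
         -(η:ℂ), -(η:ℂ), 1, (η:ℂ); -(η:ℂ), -(η:ℂ), -(η:ℂ), 1] := by
    ext i j
    fin_cases i <;> fin_cases j <;>
      simp [Hmat, Matrix.one_apply, Matrix.vecHead, Matrix.vecTail]
  rw [h]
  rw [Matrix.det_succ_row_zero]
  simp [Fin.sum_univ_succ, Matrix.det_fin_three, Fin.succAbove]
  ring

private lemma cayley : Hmat^4 + (6:ℂ) • Hmat^2 + 1 = 0 := by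
  norm_num [pow_succ, pow_zero, Hmat]
  ext i j
  fin_cases i <;> fin_cases j <;>
    norm_num [Matrix.mul_apply, Fin.sum_univ_succ, Matrix.one_apply, Fin.ext_iff]

end PCGDaux

theorem example_game_pcgd_contracts (η : ℝ) (hη : 0 < η) :
    let H : Matrix (Fin 4) (Fin 4) ℂ :=
      !![0, 1, 1, 1; -1, 0, 1, 1; -1, -1, 0, 1; -1, -1, -1, 0]
    IsUnit (1 + (η : ℂ) • H) ∧
      ∀ μ : ℂ, (∃ v : Fin 4 → ℂ, v ≠ 0 ∧
          ((1 + (η : ℂ) • H)⁻¹ * H).mulVec v = μ • v) →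
        ‖1 - (η : ℂ) * μ‖ < 1 := by
  intro H
  have hH : H = Hmat := rfl
  have hdet : IsUnit (1 + (η:ℂ) • H).det := by
    rw [hH, det_one_add, isUnit_iff_ne_zero]
    intro h
    have h' : (1:ℝ) + 6*η^2 + η^4 = 0 := by exact_mod_cast h
    nlinarith [sq_nonneg η, sq_nonneg (η^2)]
  refine ⟨(Matrix.isUnit_iff_isUnit_det _).mpr hdet, ?_⟩
  rintro μ ⟨v, hv, hx⟩
  have hmul : (1 + (η:ℂ) • H) * ((1 + (η:ℂ) • H)⁻¹ * H) = H := by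
    rw [← mul_assoc, Matrix.mul_nonsing_inv _ hdet, one_mul]
  have hHv : H.mulVec v = μ • v + ((η:ℂ)*μ) • H.mulVec v := by
    have h1 : H.mulVec v
        = (1 + (η:ℂ) • H).mulVec (((1 + (η:ℂ) • H)⁻¹ * H).mulVec v) := by
      rw [Matrix.mulVec_mulVec, hmul]
    rw [hx, Matrix.mulVec_smul, Matrix.add_mulVec, Matrix.one_mulVec,
      Matrix.smul_mulVec, smul_add, smul_smul] at h1
    simpa [mul_comm] using h1
  set c : ℂ := 1 - (η:ℂ)*μ with hc_def
  have hkey : c • H.mulVec v = μ • v := by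
    rw [hc_def, sub_smul, one_smul]
    nth_rewrite 1 [hHv]
    abel
  by_cases hc : c = 0
  · exfalso
    have hμ : μ ≠ 0 := fun h => by simp [hc_def, h] at hc
    have h0 : μ • v = 0 := by rw [← hkey, hc, zero_smul]
    rcases smul_eq_zero.mp h0 with h | h
    exacts [hμ h, hv h]
  · set lam : ℂ := c⁻¹ * μ with hlam
    have hlv : H.mulVec v = lam • v := by
      calc H.mulVec v = (c⁻¹ * c) • H.mulVec v := by
            rw [inv_mul_cancel₀ hc, one_smul]
        _ = c⁻¹ • (c • H.mulVec v) := by rw [smul_smul]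
        _ = c⁻¹ • (μ • v) := by rw [hkey]
        _ = lam • v := by rw [smul_smul]
    have h2 : (H^2).mulVec v = (lam^2) • v := by
      rw [pow_two, ← Matrix.mulVec_mulVec, hlv, Matrix.mulVec_smul, hlv,
        smul_smul, ← pow_two]
    have h4 : (H^4).mulVec v = (lam^4) • v := by
      rw [show H^4 = H^2 * H^2 from by rw [← pow_add], ← Matrix.mulVec_mulVec, h2, Matrix.mulVec_smul, h2,
        smul_smul, ← pow_two, ← pow_mul]
    have hcay : H^4 + (6:ℂ) • H^2 + 1 = 0 := by rw [hH]; exact cayley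
    have hcomb : (lam^4 + 6*lam^2 + 1) • v = 0 := by
      calc (lam^4 + 6*lam^2 + 1) • v
          = lam^4 • v + (6:ℂ) • lam^2 • v + v := by
            rw [add_smul, add_smul, one_smul, smul_smul]
        _ = (H^4).mulVec v + ((6:ℂ) • H^2).mulVec v
              + (1 : Matrix (Fin 4) (Fin 4) ℂ).mulVec v := by
            rw [h4, Matrix.smul_mulVec, h2, Matrix.one_mulVec]
        _ = (H^4 + (6:ℂ) • H^2 + 1).mulVec v := by
            rw [Matrix.add_mulVec, Matrix.add_mulVec]
        _ = 0 := by rw [hcay, Matrix.zero_mulVec]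
    have hpoly : lam^4 + 6*lam^2 + 1 = 0 := by
      rcases smul_eq_zero.mp hcomb with h | h
      exacts [h, absurd h hv]
    set z : ℂ := lam^2 with hz_def
    have hz : z*z + 6*z + 1 = 0 := by
      rw [hz_def]; linear_combination hpoly
    have h1 := congrArg Complex.im hz
    have h2' := congrArg Complex.re hz
    simp [Complex.mul_im, Complex.mul_re] at h1 h2'
    have him : z.im = 0 := by
      by_contra hne
      have hre : z.re = -3 := by
        have := mul_eq_zero.mp (show z.im * (z.re + z.re + 6) = 0 by linarith [h1])
        rcases this with h | h
        · exact absurd h hne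
        · linarith
      nlinarith [sq_nonneg z.im]
    have hzre : z.re < 0 := by
      rw [him] at h2'
      nlinarith [sq_nonneg z.re]
    -- relate z to lam
    have hz_re : z.re = lam.re^2 - lam.im^2 := by
      rw [hz_def, pow_two, Complex.mul_re]; ring
    have hz_im : z.im = 2*lam.re*lam.im := by
      rw [hz_def, pow_two, Complex.mul_im]; ring
    have hb : lam.im ≠ 0 := by
      intro h
      rw [hz_re, h] at hzre
      nlinarith [sq_nonneg lam.re]
    have ha : lam.re = 0 := by
      have h0 : 2*lam.re*lam.im = 0 := by rw [← hz_im, him]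
      rcases mul_eq_zero.mp h0 with h | h
      · rcases mul_eq_zero.mp h with h' | h'
        · norm_num at h'
        · exact h'
      · exact absurd h hb
    -- |1 + η lam| > 1
    have hsq : ‖1 + (η:ℂ)*lam‖^2 = 1 + η^2 * lam.im^2 := by
      rw [Complex.sq_norm, Complex.normSq_apply]
      simp [Complex.add_re, Complex.add_im, Complex.mul_re, Complex.mul_im, ha]
      ring
    have hgt : 1 < ‖1 + (η:ℂ)*lam‖ := by
      nlinarith [norm_nonneg (1 + (η:ℂ)*lam), pow_two_pos_of_ne_zero hb,
        mul_pos (mul_pos hη hη) (mul_pos (abs_pos.mpr hb) (abs_pos.mpr hb)),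
        sq_nonneg lam.im, mul_pos hη hη]
    have hprod : (1 + (η:ℂ)*lam) * c = 1 := by
      rw [hlam, hc_def]
      have hc' : (1:ℂ) - (η:ℂ)*μ ≠ 0 := hc
      field_simp
      ring
    have habs : ‖1 + (η:ℂ)*lam‖ * ‖c‖ = 1 := by
      rw [← norm_mul, hprod, norm_one]
    nlinarith [norm_nonneg c, habs, hgt]
end

section
/- Let H be a real invertible d×d matrix with symmetric part S = (H + Hᵀ)/2 positive semidefinite, antisymmetric part A = (H - Hᵀ)/2, and suppose H = A (i.e., S = 0). Then for every η > 0 and every complex eigenvalue μ of (I + η·H_o)⁻¹·H where H_o = H, the iteration matrix I - η·(I + η·H)⁻¹·H has all eigenvalues strictly inside the unit circle. -/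
open Matrix

private lemma star_dot_aux {d : ℕ} (v w : Fin d → ℂ) :
    star (star v ⬝ᵥ w) = star w ⬝ᵥ v := by
  rw [star_dotProduct, star_star]

private lemma skew_dot_aux {d : ℕ} (Hc : Matrix (Fin d) (Fin d) ℂ)
    (h : Hc.conjTranspose = -Hc) (v : Fin d → ℂ) :
    star (star v ⬝ᵥ Hc *ᵥ v) = -(star v ⬝ᵥ Hc *ᵥ v) := by
  rw [star_dot_aux]
  rw [star_mulVec, h, Matrix.vecMul_neg, neg_dotProduct, dotProduct_mulVec]

/-- If the game Hessian `H` is invertible and purely antisymmetric (`S = 0`, `H_o = H`),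
then for every step size `η > 0` the PCGD iteration matrix
`I - η (I + η H)⁻¹ H` has all complex eigenvalues strictly inside the unit circle. -/
theorem pcgd_contracts_antisymmetric (d : ℕ) (H : Matrix (Fin d) (Fin d) ℝ)
    (hinv : IsUnit H) (hanti : H.transpose = -H) (η : ℝ) (hη : 0 < η) :
    let Hc : Matrix (Fin d) (Fin d) ℂ := H.map (Complex.ofReal)
    IsUnit (1 + (η : ℂ) • Hc) ∧
      ∀ ν : ℂ, (∃ v : Fin d → ℂ, v ≠ 0 ∧
          ((1 - (η : ℂ) • ((1 + (η : ℂ) • Hc)⁻¹ * Hc)).mulVec v) = ν • v) →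
        ‖ν‖ < 1 := by
  intro Hc
  have hHcT : Hc.conjTranspose = -Hc := by
    ext i j
    have := congrFun (congrFun hanti j) i
    simp only [Matrix.transpose_apply] at this
    simp [Hc, Matrix.conjTranspose_apply, Matrix.map_apply, Complex.conj_ofReal, this]
  have hHcUnit : IsUnit Hc := hinv.map (Complex.ofRealHom.mapMatrix)
  -- positivity of star v ⬝ᵥ v
  have hpos : ∀ v : Fin d → ℂ, v ≠ 0 →
      0 < (star v ⬝ᵥ v).re ∧ (star v ⬝ᵥ v).im = 0 := by
    intro v hv
    have hval : star v ⬝ᵥ v = ((∑ i, Complex.normSq (v i) : ℝ) : ℂ) := by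
      push_cast
      simp [dotProduct, Complex.star_def, Complex.mul_conj, mul_comm]
    obtain ⟨i, hi⟩ := Function.ne_iff.mp hv
    have hsum : 0 < ∑ i, Complex.normSq (v i) := by
      apply Finset.sum_pos' (fun j _ => Complex.normSq_nonneg _)
      exact ⟨i, Finset.mem_univ i, Complex.normSq_pos.mpr hi⟩
    rw [hval]
    simp [hsum]
  -- purely imaginary dot products
  have him : ∀ v : Fin d → ℂ, (star v ⬝ᵥ Hc *ᵥ v).re = 0 := by
    intro v
    have h := skew_dot_aux Hc hHcT v
    have h2 := congrArg Complex.re h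
    simp only [Complex.star_def, Complex.conj_re, Complex.neg_re] at h2
    linarith
  have hUnit : IsUnit (1 + (η : ℂ) • Hc) := by
    rw [Matrix.isUnit_iff_isUnit_det, isUnit_iff_ne_zero]
    intro hdet
    obtain ⟨v, hv, hker⟩ := Matrix.exists_mulVec_eq_zero_iff.mpr hdet
    have h0 : star v ⬝ᵥ ((1 + (η : ℂ) • Hc) *ᵥ v) = 0 := by
      rw [hker, dotProduct_zero]
    rw [Matrix.add_mulVec, Matrix.one_mulVec, dotProduct_add,
      Matrix.smul_mulVec, dotProduct_smul] at h0
    have h0re := congrArg Complex.re h0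
    have hre := (hpos v hv).1
    have hi := him v
    simp only [Complex.add_re, Complex.zero_re, smul_eq_mul,
      Complex.mul_re, Complex.ofReal_re, Complex.ofReal_im,
      zero_mul, sub_zero] at h0re
    rw [hi] at h0re
    linarith
  refine ⟨hUnit, ?_⟩
  rintro ν ⟨v, hv, hev⟩
  by_cases hν0 : ν = 0
  · simp [hν0]
  have hdet : IsUnit (1 + (η : ℂ) • Hc).det := (Matrix.isUnit_iff_isUnit_det _).mp hUnit
  have hM : (1 : Matrix (Fin d) (Fin d) ℂ) - (η : ℂ) • ((1 + (η : ℂ) • Hc)⁻¹ * Hc)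
      = (1 + (η : ℂ) • Hc)⁻¹ := by
    have h1 : (1 + (η : ℂ) • Hc)⁻¹ * (1 + (η : ℂ) • Hc)
        = (1 + (η : ℂ) • Hc)⁻¹ + (η : ℂ) • ((1 + (η : ℂ) • Hc)⁻¹ * Hc) := by
      rw [mul_add, mul_one, Matrix.mul_smul]
    rw [Matrix.nonsing_inv_mul _ hdet] at h1
    exact (eq_sub_of_add_eq h1.symm).symm
  rw [hM] at hev
  have hv2 : v = (1 + (η : ℂ) • Hc) *ᵥ (ν • v) := by
    rw [← hev, Matrix.mulVec_mulVec, Matrix.mul_nonsing_inv _ hdet, Matrix.one_mulVec]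
  rw [Matrix.add_mulVec, Matrix.one_mulVec, Matrix.smul_mulVec,
    Matrix.mulVec_smul] at hv2
  have hne : (η : ℂ) * ν ≠ 0 :=
    mul_ne_zero (Complex.ofReal_ne_zero.mpr hη.ne') hν0
  -- hv2 : v = ν • v + η • (ν • (Hc *ᵥ v))
  have hμ : Hc *ᵥ v = (((1 - ν) / ((η : ℂ) * ν)) • v) := by
    have h3 : ((η : ℂ) * ν) • (Hc *ᵥ v) = (1 - ν) • v := by
      funext i
      have hi := congrFun hv2 i
      simp only [Pi.add_apply, Pi.smul_apply, smul_eq_mul] at hi ⊢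
      linear_combination -hi
    have h4 := congrArg (fun w => (((η : ℂ) * ν)⁻¹) • w) h3
    simp only [smul_smul, inv_mul_cancel₀ hne, one_smul] at h4
    rw [h4, div_eq_inv_mul]
  set μ : ℂ := (1 - ν) / ((η : ℂ) * ν) with hμdef
  -- μ is purely imaginary
  have hs : star v ⬝ᵥ Hc *ᵥ v = μ * (star v ⬝ᵥ v) := by
    rw [hμ, dotProduct_smul, smul_eq_mul]
  have hμre : μ.re = 0 := by
    have h1 := him v
    rw [hs] at h1
    have hp := hpos v hv
    simp only [Complex.mul_re, hp.2, mul_zero, sub_zero] at h1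
    rcases mul_eq_zero.mp h1 with h | h
    · exact h
    · exact absurd h (ne_of_gt hp.1)
  -- μ ≠ 0
  have hμne : μ ≠ 0 := by
    intro h0
    rw [h0, zero_smul] at hμ
    have : Hc.det = 0 := Matrix.exists_mulVec_eq_zero_iff.mp ⟨v, hv, hμ⟩
    rw [Matrix.isUnit_iff_isUnit_det, isUnit_iff_ne_zero] at hHcUnit
    exact hHcUnit this
  have hμim : μ.im ≠ 0 := fun h => hμne (Complex.ext hμre h)
  -- ν * (1 + η * μ) = 1
  have hμmul : μ * ((η : ℂ) * ν) = 1 - ν := div_mul_cancel₀ _ hne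
  have hkey : ν * (1 + (η : ℂ) * μ) = 1 := by linear_combination hμmul
  have habs : ‖ν‖ * ‖(1 + (η : ℂ) * μ)‖ = 1 := by
    rw [← norm_mul, hkey, norm_one]
  have hgt : 1 < ‖(1 + (η : ℂ) * μ)‖ := by
    have hsq : (‖(1 + (η : ℂ) * μ)‖) ^ 2 = 1 + (η * μ.im) ^ 2 := by
      rw [Complex.sq_norm, Complex.normSq_apply]
      simp only [Complex.add_re, Complex.add_im, Complex.mul_re, Complex.mul_im,
        Complex.one_re, Complex.one_im, Complex.ofReal_re, Complex.ofReal_im, hμre]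
      ring
    nlinarith [norm_nonneg (1 + (η : ℂ) * μ),
      sq_pos_of_ne_zero (mul_ne_zero hη.ne' hμim)]
  nlinarith [norm_nonneg ν]
end

section
/- Let H be a real d×d matrix with positive semidefinite symmetric part S and let H_o = A + S_o where A is the antisymmetric part of H and S_o the off-block-diagonal part of S. Assume H is invertible and 0 < η < 1/(4‖S‖). Then I + η·H_o is invertible and every complex eigenvalue μ of (I + η·H_o)⁻¹·H satisfies |1 - η·μ| < 1. -/
open Matrix Complex

namespace PCGDaux

variable {d m : ℕ}

lemma dot_transpose (M : Matrix (Fin d) (Fin d) ℝ) (u w : Fin d → ℝ) :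
    u ⬝ᵥ (Mᵀ *ᵥ w) = w ⬝ᵥ (M *ᵥ u) := by
  simp only [dotProduct, mulVec, transpose_apply, Finset.mul_sum]
  rw [Finset.sum_comm]
  exact Finset.sum_congr rfl fun i _ => Finset.sum_congr rfl fun j _ => by ring

lemma quad_re (M : Matrix (Fin d) (Fin d) ℝ) (v : Fin d → ℂ) :
    (star v ⬝ᵥ ((M.map Complex.ofReal) *ᵥ v)).re =
      (fun i => (v i).re) ⬝ᵥ (M *ᵥ fun i => (v i).re) +
      (fun i => (v i).im) ⬝ᵥ (M *ᵥ fun i => (v i).im) := by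
  calc (star v ⬝ᵥ ((M.map Complex.ofReal) *ᵥ v)).re
      = ∑ i, ∑ j, (star (v i) * ((M i j : ℂ) * v j)).re := by
        simp only [dotProduct, mulVec, Matrix.map_apply, Pi.star_apply, Finset.mul_sum, re_sum]
    _ = ∑ i, ∑ j, ((v i).re * (M i j * (v j).re) + (v i).im * (M i j * (v j).im)) := by
        refine Finset.sum_congr rfl fun i _ => Finset.sum_congr rfl fun j _ => ?_
        simp only [RCLike.star_def, Complex.mul_re, Complex.mul_im, Complex.conj_re,
          Complex.conj_im, Complex.ofReal_re, Complex.ofReal_im]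
        ring
    _ = _ := by
        simp only [dotProduct, mulVec, Finset.mul_sum]
        rw [← Finset.sum_add_distrib]
        exact Finset.sum_congr rfl fun i _ => by rw [← Finset.sum_add_distrib]

lemma quad_im (M : Matrix (Fin d) (Fin d) ℝ) (v : Fin d → ℂ) :
    (star v ⬝ᵥ ((M.map Complex.ofReal) *ᵥ v)).im =
      (fun i => (v i).re) ⬝ᵥ (M *ᵥ fun i => (v i).im) -
      (fun i => (v i).im) ⬝ᵥ (M *ᵥ fun i => (v i).re) := by
  calc (star v ⬝ᵥ ((M.map Complex.ofReal) *ᵥ v)).im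
      = ∑ i, ∑ j, (star (v i) * ((M i j : ℂ) * v j)).im := by
        simp only [dotProduct, mulVec, Matrix.map_apply, Pi.star_apply, Finset.mul_sum, im_sum]
    _ = ∑ i, ∑ j, ((v i).re * (M i j * (v j).im) - (v i).im * (M i j * (v j).re)) := by
        refine Finset.sum_congr rfl fun i _ => Finset.sum_congr rfl fun j _ => ?_
        simp only [RCLike.star_def, Complex.mul_re, Complex.mul_im, Complex.conj_re,
          Complex.conj_im, Complex.ofReal_re, Complex.ofReal_im]
        ring
    _ = _ := by
        simp only [dotProduct, mulVec, Finset.mul_sum]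
        rw [← Finset.sum_sub_distrib]
        exact Finset.sum_congr rfl fun i _ => by rw [← Finset.sum_sub_distrib]

lemma dot_self_eq (v : Fin d → ℂ) :
    star v ⬝ᵥ v = (((fun i => (v i).re) ⬝ᵥ (fun i => (v i).re) +
      (fun i => (v i).im) ⬝ᵥ (fun i => (v i).im) : ℝ) : ℂ) := by
  apply Complex.ext
  · simp only [dotProduct, Pi.star_apply, re_sum, Complex.ofReal_re]
    rw [← Finset.sum_add_distrib]
    refine Finset.sum_congr rfl fun i _ => ?_
    simp only [RCLike.star_def, Complex.mul_re, Complex.conj_re, Complex.conj_im]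
    ring
  · simp only [dotProduct, Pi.star_apply, im_sum, Complex.ofReal_im]
    refine Finset.sum_eq_zero fun i _ => ?_
    simp only [RCLike.star_def, Complex.mul_im, Complex.conj_re, Complex.conj_im]
    ring

lemma blockdiag_quad (S : Matrix (Fin d) (Fin d) ℝ) (b : Fin d → Fin m) (x : Fin d → ℝ) :
    x ⬝ᵥ ((fun i j => if b i = b j then S i j else 0 : Matrix (Fin d) (Fin d) ℝ) *ᵥ x)
      = ∑ a : Fin m, (fun i => if b i = a then x i else 0) ⬝ᵥ
          (S *ᵥ fun i => if b i = a then x i else 0) := by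
  calc x ⬝ᵥ ((fun i j => if b i = b j then S i j else 0 : Matrix (Fin d) (Fin d) ℝ) *ᵥ x)
      = ∑ i, ∑ j, x i * ((if b i = b j then S i j else 0) * x j) := by
        simp only [dotProduct, mulVec, Finset.mul_sum]
    _ = ∑ i, ∑ j, ∑ a : Fin m, (if b i = a then x i else 0) *
          (S i j * (if b j = a then x j else 0)) := by
        refine Finset.sum_congr rfl fun i _ => Finset.sum_congr rfl fun j _ => ?_
        rw [Finset.sum_eq_single (b i) (fun a _ ha => by simp [(Ne.symm ha : ¬ b i = a)])
          (fun h => absurd (Finset.mem_univ _) h)]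
        by_cases h : b i = b j
        · rw [if_pos h, if_pos rfl, if_pos h.symm]

        · rw [if_neg h, if_pos rfl, if_neg (fun hh => h hh.symm)]; ring
    _ = ∑ i, ∑ a : Fin m, ∑ j, (if b i = a then x i else 0) *
          (S i j * (if b j = a then x j else 0)) :=
        Finset.sum_congr rfl fun i _ => Finset.sum_comm
    _ = ∑ a : Fin m, ∑ i, ∑ j, (if b i = a then x i else 0) *
          (S i j * (if b j = a then x j else 0)) := Finset.sum_comm
    _ = _ := by simp only [dotProduct, mulVec, Finset.mul_sum]

lemma partition_dot (b : Fin d → Fin m) (x : Fin d → ℝ) :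
    ∑ a : Fin m, (fun i => if b i = a then x i else 0) ⬝ᵥ (fun i => if b i = a then x i else 0)
      = x ⬝ᵥ x := by
  simp only [dotProduct]
  rw [Finset.sum_comm]
  refine Finset.sum_congr rfl fun i _ => ?_
  rw [Finset.sum_eq_single (b i) (fun a _ ha => by simp [(Ne.symm ha : ¬ b i = a)])
    (fun h => absurd (Finset.mem_univ _) h)]
  simp

lemma quad_le_opNorm (S : Matrix (Fin d) (Fin d) ℝ) (u : Fin d → ℝ) :
    u ⬝ᵥ (S *ᵥ u) ≤ ‖Matrix.toEuclideanCLM (𝕜 := ℝ) S‖ * (u ⬝ᵥ u) := by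
  set T := Matrix.toEuclideanCLM (𝕜 := ℝ) S with hT
  set u' : EuclideanSpace ℝ (Fin d) := (WithLp.equiv 2 (Fin d → ℝ)).symm u with hu'
  have h1 : u ⬝ᵥ (S *ᵥ u) = inner ℝ u' (T u') := by
    rw [EuclideanSpace.inner_eq_star_dotProduct]
    simp [hu', hT, Matrix.toLin'_apply]
    exact dotProduct_comm _ _
  have h2 : inner ℝ u' (T u') ≤ ‖u'‖ * ‖T u'‖ := real_inner_le_norm _ _
  have h3 : ‖T u'‖ ≤ ‖T‖ * ‖u'‖ := T.le_opNorm u'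
  have h4 : u ⬝ᵥ u = ‖u'‖ ^ 2 := by
    rw [← real_inner_self_eq_norm_sq]
    rw [EuclideanSpace.inner_eq_star_dotProduct]
    simp [hu']
  nlinarith [norm_nonneg u', norm_nonneg (T u'), norm_nonneg T]

end PCGDaux


/-- Spectral core of the PCGD convergence theorem: if the game Hessian `H` is
invertible, its symmetric part `S` is PSD, and `0 < η < 1/(4‖S‖)` (stated as
`η * (4‖S‖) < 1`, which covers the convention `1/(4·0) = ∞`), then
`I + η H_o` is invertible and every complex eigenvalue `μ` of `(I + η H_o)⁻¹ H`
satisfies `|1 - η μ| < 1`. Here `H_o = A + S_o` with `A` the antisymmetric part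
and `S_o` the off-block-diagonal part of `S` for the block partition `b`. -/
theorem pcgd_spectral_core (d m : ℕ) (H : Matrix (Fin d) (Fin d) ℝ)
    (b : Fin d → Fin m)
    (S : Matrix (Fin d) (Fin d) ℝ) (hS : S = (1 / 2 : ℝ) • (H + H.transpose))
    (A : Matrix (Fin d) (Fin d) ℝ) (hA : A = (1 / 2 : ℝ) • (H - H.transpose))
    (S_d : Matrix (Fin d) (Fin d) ℝ)
    (hSd : S_d = fun i j => if b i = b j then S i j else 0)
    (S_o : Matrix (Fin d) (Fin d) ℝ) (hSo : S_o = S - S_d)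
    (H_o : Matrix (Fin d) (Fin d) ℝ) (hHo : H_o = A + S_o)
    (hpsd : S.PosSemidef) (hinv : IsUnit H)
    (η : ℝ) (hη : 0 < η) (hη' : η * (4 * ‖Matrix.toEuclideanCLM (𝕜 := ℝ) S‖) < 1) :
    let H_oc : Matrix (Fin d) (Fin d) ℂ := H_o.map (Complex.ofReal)
    let Hc : Matrix (Fin d) (Fin d) ℂ := H.map (Complex.ofReal)
    IsUnit (1 + (η : ℂ) • H_oc) ∧
      ∀ μ : ℂ, (∃ v : Fin d → ℂ, v ≠ 0 ∧
          ((1 + (η : ℂ) • H_oc)⁻¹ * Hc).mulVec v = μ • v) →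
        ‖1 - (η : ℂ) * μ‖ < 1 := by
  intro H_oc Hc
  have hHoc : H_oc = H_o.map (Complex.ofReal) := rfl
  have hHc : Hc = H.map (Complex.ofReal) := rfl
  set nS := ‖Matrix.toEuclideanCLM (𝕜 := ℝ) S‖ with hnS
  have hnS0 : 0 ≤ nS := norm_nonneg _
  have hη1 : η * nS < 1 := by nlinarith [mul_nonneg hη.le hnS0]
  -- symmetry facts
  have hSsymm : Sᵀ = S := by
    have h := hpsd.1
    rwa [Matrix.IsHermitian, Matrix.conjTranspose_eq_transpose_of_trivial] at h
  have hSij : ∀ i j, S j i = S i j := by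
    intro i j
    conv_rhs => rw [← hSsymm]
    rfl
  have hSdsymm : S_dᵀ = S_d := by
    rw [hSd]; ext i j
    change (if b j = b i then S j i else 0) = (if b i = b j then S i j else 0)
    by_cases h : b i = b j
    · rw [if_pos h.symm, if_pos h]
      exact hSij i j
    · rw [if_neg (fun hh => h hh.symm), if_neg h]
  have hHoH : H_o = H - S_d := by
    rw [hHo, hSo, hA, hS]; module
  -- x M x = x S x for quadratic forms
  have hq : ∀ u : Fin d → ℝ, u ⬝ᵥ (H *ᵥ u) = u ⬝ᵥ (S *ᵥ u) := by
    intro u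
    rw [hS, Matrix.smul_mulVec, Matrix.add_mulVec, dotProduct_smul, dotProduct_add,
      PCGDaux.dot_transpose H u u]
    simp
    ring
  -- the key quadratic-form data for an arbitrary vector
  have key : ∀ v : Fin d → ℂ, ∃ N σ δ α : ℝ,
      (star v ⬝ᵥ v) = (N : ℂ) ∧
      (star v ⬝ᵥ (Hc *ᵥ v)) = (σ : ℂ) + (α : ℂ) * Complex.I ∧
      (star v ⬝ᵥ (H_oc *ᵥ v)) = ((σ - δ : ℝ) : ℂ) + (α : ℂ) * Complex.I ∧
      0 ≤ σ ∧ 0 ≤ δ ∧ δ ≤ nS * N ∧ (v ≠ 0 → 0 < N) := by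
    intro v
    set x : Fin d → ℝ := fun i => (v i).re with hx
    set y : Fin d → ℝ := fun i => (v i).im with hy
    refine ⟨x ⬝ᵥ x + y ⬝ᵥ y, x ⬝ᵥ (S *ᵥ x) + y ⬝ᵥ (S *ᵥ y),
      x ⬝ᵥ (S_d *ᵥ x) + y ⬝ᵥ (S_d *ᵥ y), x ⬝ᵥ (H *ᵥ y) - y ⬝ᵥ (H *ᵥ x),
      ?_, ?_, ?_, ?_, ?_, ?_, ?_⟩
    · exact PCGDaux.dot_self_eq v
    · apply Complex.ext
      · rw [hHc, PCGDaux.quad_re]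
        simp [hq x, hq y]
        exact congrArg₂ (· + ·) (hq x) (hq y)
      · rw [hHc, PCGDaux.quad_im]
        simp
        rfl
    · apply Complex.ext
      · rw [hHoc, PCGDaux.quad_re, hHoH]
        simp only [Matrix.sub_mulVec, dotProduct_sub, Complex.add_re, Complex.ofReal_re,
          Complex.mul_re, Complex.I_re, Complex.I_im, Complex.ofReal_im]
        rw [hq x, hq y]
        ring
      · rw [hHoc, PCGDaux.quad_im, hHoH]
        have hsd : x ⬝ᵥ (S_d *ᵥ y) = y ⬝ᵥ (S_d *ᵥ x) := by
          conv_lhs => rw [← hSdsymm, PCGDaux.dot_transpose]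
        simp only [Matrix.sub_mulVec, dotProduct_sub, Complex.add_im, Complex.ofReal_im,
          Complex.mul_im, Complex.I_re, Complex.I_im, Complex.ofReal_re]
        rw [hsd]
        ring
    · have h1 := hpsd.dotProduct_mulVec_nonneg x
      have h2 := hpsd.dotProduct_mulVec_nonneg y
      simp only [star_trivial] at h1 h2
      exact add_nonneg h1 h2
    · rw [hSd, PCGDaux.blockdiag_quad S b x, PCGDaux.blockdiag_quad S b y]
      apply add_nonneg <;>
        exact Finset.sum_nonneg fun a _ => by simpa using hpsd.dotProduct_mulVec_nonneg _
    · rw [hSd, PCGDaux.blockdiag_quad S b x, PCGDaux.blockdiag_quad S b y]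
      have bx : ∑ a : Fin m, (fun i => if b i = a then x i else 0) ⬝ᵥ
            (S *ᵥ fun i => if b i = a then x i else 0) ≤ nS * (x ⬝ᵥ x) := by
        rw [← PCGDaux.partition_dot b x, Finset.mul_sum]
        exact Finset.sum_le_sum fun a _ => PCGDaux.quad_le_opNorm S _
      have by' : ∑ a : Fin m, (fun i => if b i = a then y i else 0) ⬝ᵥ
            (S *ᵥ fun i => if b i = a then y i else 0) ≤ nS * (y ⬝ᵥ y) := by
        rw [← PCGDaux.partition_dot b y, Finset.mul_sum]
        exact Finset.sum_le_sum fun a _ => PCGDaux.quad_le_opNorm S _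
      calc _ ≤ nS * (x ⬝ᵥ x) + nS * (y ⬝ᵥ y) := add_le_add bx by'
        _ = nS * (x ⬝ᵥ x + y ⬝ᵥ y) := by ring
    · intro hv
      obtain ⟨i, hi⟩ := Function.ne_iff.mp hv
      have hpos : 0 < x i * x i + y i * y i := by
        have := Complex.normSq_pos.mpr hi
        rwa [Complex.normSq_apply] at this
      have : x ⬝ᵥ x + y ⬝ᵥ y = ∑ j, (x j * x j + y j * y j) := by
        rw [Finset.sum_add_distrib]; rfl
      rw [this]
      exact Finset.sum_pos' (fun j _ => add_nonneg (mul_self_nonneg _) (mul_self_nonneg _)) ⟨i, Finset.mem_univ i, hpos⟩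
  -- Part 1: invertibility
  have hMunit : IsUnit (1 + (η : ℂ) • H_oc) := by
    rw [Matrix.isUnit_iff_isUnit_det, isUnit_iff_ne_zero]
    intro hdet
    obtain ⟨v, hv, hveq⟩ := (Matrix.exists_mulVec_eq_zero_iff).mpr hdet
    obtain ⟨N, σ, δ, α, hN, hHq, hHoq, hσ, hδ, hδN, hNpos⟩ := key v
    have hNpos := hNpos hv
    have h0 : star v ⬝ᵥ ((1 + (η : ℂ) • H_oc) *ᵥ v) = 0 := by
      rw [hveq, dotProduct_zero]
    rw [Matrix.add_mulVec, Matrix.one_mulVec, Matrix.smul_mulVec, dotProduct_add,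
      dotProduct_smul, hN, hHoq] at h0
    have hre := congrArg Complex.re h0
    simp only [smul_eq_mul, Complex.add_re, Complex.ofReal_re, Complex.mul_re,
      Complex.ofReal_im, Complex.add_im, Complex.I_re, Complex.I_im, Complex.mul_im,
      Complex.zero_re, mul_zero, mul_one, zero_mul, sub_zero, add_zero, zero_sub, zero_add] at hre
    nlinarith [mul_nonneg hη.le hσ, mul_le_mul_of_nonneg_left hδN hη.le,
      mul_pos hη hNpos]
  refine ⟨hMunit, ?_⟩
  rintro μ ⟨v, hv, hveq⟩
  set M : Matrix (Fin d) (Fin d) ℂ := 1 + (η : ℂ) • H_oc with hM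
  have hdet : IsUnit M.det := (Matrix.isUnit_iff_isUnit_det M).mp hMunit
  have hMM : M * M⁻¹ = 1 := Matrix.mul_nonsing_inv M hdet
  have heig : Hc *ᵥ v = μ • (M *ᵥ v) := by
    have h1 := congrArg (fun w => M *ᵥ w) hveq
    simp only [Matrix.mulVec_mulVec, Matrix.mulVec_smul] at h1
    rwa [← Matrix.mul_assoc, hMM, Matrix.one_mul] at h1
  obtain ⟨N, σ, δ, α, hN, hHq, hHoq, hσ, hδ, hδN, hNpos⟩ := key v
  have hNpos := hNpos hv
  set D : ℂ := ((N + η * (σ - δ) : ℝ) : ℂ) + ((η * α : ℝ) : ℂ) * Complex.I with hD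
  have hMv : star v ⬝ᵥ (M *ᵥ v) = D := by
    rw [hM, Matrix.add_mulVec, Matrix.one_mulVec, Matrix.smul_mulVec, dotProduct_add,
      dotProduct_smul, hN, hHoq, hD]
    simp only [smul_eq_mul]
    push_cast
    ring
  have hreD : 0 < N + η * (σ - δ) := by
    nlinarith [mul_nonneg hη.le hσ, mul_le_mul_of_nonneg_left hδN hη.le, mul_pos hη hNpos]
  have hr : 0 < N - η * δ := by
    nlinarith [mul_le_mul_of_nonneg_left hδN hη.le, mul_pos hη hNpos]
  have hDne : D ≠ 0 := by
    intro h
    have := congrArg Complex.re h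
    simp only [hD, Complex.add_re, Complex.ofReal_re, Complex.mul_re, Complex.I_re,
      Complex.I_im, Complex.ofReal_im, Complex.zero_re, mul_zero, zero_mul, sub_zero,
      mul_one] at this
    linarith
  have hqeq : (σ : ℂ) + (α : ℂ) * Complex.I = μ * D := by
    have h2 := congrArg (fun w => star v ⬝ᵥ w) heig
    simp only [dotProduct_smul, smul_eq_mul] at h2
    rwa [hHq, hMv] at h2
  have hμ : μ = ((σ : ℂ) + (α : ℂ) * Complex.I) / D := by
    rw [eq_div_iff hDne]; exact hqeq.symm
  have h1 : 1 - (η : ℂ) * μ = ((N - η * δ : ℝ) : ℂ) / D := by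
    have hnum : ((N - η * δ : ℝ) : ℂ) = D - (η : ℂ) * ((σ : ℂ) + (α : ℂ) * Complex.I) := by
      rw [hD]; push_cast; ring
    rw [hμ, hnum]
    field_simp
  have habs2 : (‖1 - (η : ℂ) * μ‖) ^ 2 =
      (N - η * δ) ^ 2 / ((N + η * (σ - δ)) ^ 2 + (η * α) ^ 2) := by
    rw [h1, norm_div, div_pow, Complex.sq_norm, Complex.sq_norm, Complex.normSq_ofReal,
      hD, Complex.normSq_add_mul_I]
    ring_nf
  have hineq : (N - η * δ) ^ 2 < (N + η * (σ - δ)) ^ 2 + (η * α) ^ 2 := by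
    rcases eq_or_lt_of_le hσ with hσ0 | hσpos
    · have hσ' : σ = 0 := hσ0.symm
      rcases eq_or_ne α 0 with hα0 | hα0
      · exfalso
        have hμ0 : μ = 0 := by
          have : μ * D = 0 := by rw [← hqeq, hσ', hα0]; simp
          exact (mul_eq_zero.mp this).resolve_right hDne
        have hHcv : Hc *ᵥ v = 0 := by rw [heig, hμ0, zero_smul]
        have hdetH : H.det ≠ 0 := by
          have := (Matrix.isUnit_iff_isUnit_det H).mp hinv
          exact isUnit_iff_ne_zero.mp this
        have hdetHc : Hc.det ≠ 0 := by
          rw [hHc]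
          have : (H.map (Complex.ofReal)).det = (H.det : ℂ) := by
            rw [show H.map (Complex.ofReal) = Complex.ofRealHom.mapMatrix H from rfl,
              ← RingHom.map_det]
            rfl
          rw [this]
          exact_mod_cast hdetH
        exact hdetHc ((Matrix.exists_mulVec_eq_zero_iff).mp ⟨v, hv, hHcv⟩)
      · rw [hσ']
        have h2 : 0 < (η * α) ^ 2 := by positivity
        nlinarith
    · nlinarith [mul_pos hη hσpos, hr]
  have habslt : (‖1 - (η : ℂ) * μ‖) ^ 2 < 1 := by
    rw [habs2, div_lt_one (by positivity)]
    exact hineq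
  nlinarith [norm_nonneg (1 - (η : ℂ) * μ), habslt]
end
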